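/- Let c > 0 and let u ∈ C²(𝒟) satisfy Δu(x) ≤ c e^{2u(x)} for all x ∈ 𝒟, and suppose u(x) → ∞ as |x| → 1⁻. Then u(x) ≥ log(2/(√c (1 − |x|²))) for all x ∈ 𝒟. (With c = 1/(2t) this gives the lower bound u(x,t) ≥ log(2/(1−|x|²)) + (1/2) log(2t) for a Ricci flow with curvature K[u(t)] ≥ −1/(2t) that blows up at the boundary.) -/

import Mathlib

open Real MeasureTheory Metric Set Filter Topology ENNReal

/-- The plane `ℝ²`. -/
abbrev Plane := EuclideanSpace ℝ (Fin 2)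

/-- The Euclidean Laplacian `Δu = ∑ᵢ ∂²u/∂xᵢ²` on `ℝ²`. -/
noncomputable def laplacian (u : Plane → ℝ) (x : Plane) : ℝ :=
  ∑ i : Fin 2, iteratedFDeriv ℝ 2 u x (fun _ => EuclideanSpace.single i 1)

section helpers

lemma contDiffAt_deriv_of_contDiffAt {p : ℝ → ℝ} {t : ℝ} (hp : ContDiffAt ℝ 2 p t) :
    ContDiffAt ℝ 1 (deriv p) t := by
  have h := (hp.fderiv_right (m := 1) le_rfl).clm_apply (contDiffAt_const (c := (1:ℝ)))
  exact h.congr_of_eventuallyEq (Filter.Eventually.of_forall fun s => rfl)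


lemma second_deriv_nonpos_of_isLocalMax {g : ℝ → ℝ} (hg : ContDiffAt ℝ 2 g 0)
    (hmax : IsLocalMax g 0) : deriv (deriv g) 0 ≤ 0 := by
  by_contra hpos
  push_neg at hpos
  set m := deriv (deriv g) 0 with hm
  -- deriv g has derivative m at 0
  have hd1 : ContDiffAt ℝ 1 (deriv g) 0 := contDiffAt_deriv_of_contDiffAt hg
  have hder : HasDerivAt (deriv g) m 0 := (hd1.differentiableAt one_ne_zero).hasDerivAt
  have h0 : deriv g 0 = 0 := hmax.deriv_eq_zero
  -- eventually differentiable near 0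
  have hev : ∀ᶠ t in 𝓝 (0:ℝ), DifferentiableAt ℝ g t ∧ g t ≤ g 0 := by
    filter_upwards [(hg.eventually (by norm_num)), hmax] with t ht ht'
    exact ⟨ht.differentiableAt two_ne_zero, ht'⟩
  -- deriv g positive just right of 0
  have hslope : Tendsto (slope (deriv g) 0) (𝓝[≠] 0) (𝓝 m) :=
    hasDerivAt_iff_tendsto_slope.1 hder
  have hpos' : ∀ᶠ t in 𝓝[>] (0:ℝ), 0 < deriv g t := by
    have h1 : ∀ᶠ t in 𝓝[>] (0:ℝ), 0 < slope (deriv g) 0 t := by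
      have := hslope.mono_left (nhdsWithin_mono 0 (fun t ht => ne_of_gt ht))
      exact this.eventually (eventually_gt_nhds hpos)
    filter_upwards [h1, self_mem_nhdsWithin] with t h1t h2t
    have heq : slope (deriv g) 0 t = deriv g t / t := by
      rw [slope_def_field, h0, sub_zero, sub_zero]
    rw [heq] at h1t
    have := mul_pos h1t (h2t : (0:ℝ) < t)
    rwa [div_mul_cancel₀ _ (ne_of_gt (h2t : (0:ℝ) < t))] at this
  -- extract intervals
  obtain ⟨ε, hε, hεh⟩ := Metric.eventually_nhds_iff.1 hev
  obtain ⟨d, hd, hdsub⟩ := mem_nhdsGT_iff_exists_Ioo_subset.1 hpos'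
  set δ : ℝ := min (ε/2) (d/2) with hδ
  have hδ0 : 0 < δ := lt_min (by linarith) (by linarith [mem_Ioi.1 hd])
  have hmono : StrictMonoOn g (Icc 0 δ) := by
    apply strictMonoOn_of_deriv_pos (convex_Icc 0 δ)
    · intro t ht
      have : |t| < ε := by
        rw [abs_lt]
        constructor
        · linarith [ht.1]
        · have := ht.2; have : t ≤ δ := this
          have := min_le_left (ε/2) (d/2)
          linarith
      have hdist : dist t 0 < ε := by simpa [Real.dist_eq] using this
      exact ((hεh hdist).1).continuousAt.continuousWithinAt
    · intro t ht
      rw [interior_Icc] at ht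
      apply hdsub
      constructor
      · exact ht.1
      · have : t < δ := ht.2
        have := min_le_right (ε/2) (d/2)
        have := mem_Ioi.1 hd
        linarith
  have h1 : g 0 < g δ := hmono (left_mem_Icc.2 hδ0.le) (right_mem_Icc.2 hδ0.le) hδ0
  have h2 : g δ ≤ g 0 := by
    have hdist : dist δ (0:ℝ) < ε := by
      simp only [dist_zero_right, Real.norm_eq_abs, abs_of_pos hδ0]
      have := min_le_left (ε/2) (d/2); linarith
    exact (hεh hdist).2
  linarith


lemma iteratedFDeriv_two_line {f : Plane → ℝ} {x v : Plane} (hf : ContDiffAt ℝ 2 f x) :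
    iteratedFDeriv ℝ 2 f x (fun _ => v) = deriv (deriv (fun t : ℝ => f (x + t • v))) 0 := by
  rw [iteratedFDeriv_two_apply]
  have hL : ∀ t : ℝ, HasDerivAt (fun s : ℝ => x + s • v) v t := by
    intro t
    simpa using ((hasDerivAt_id t).smul_const v).const_add x
  -- eventually differentiable
  have hev : ∀ᶠ t in 𝓝 (0:ℝ), DifferentiableAt ℝ f (x + t • v) := by
    have h1 : Tendsto (fun t : ℝ => x + t • v) (𝓝 0) (𝓝 x) := by
      have := (hL 0).continuousAt
      simpa using this.tendsto
    exact h1.eventually ((hf.eventually (by norm_num)).mono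
      (fun y hy => hy.differentiableAt two_ne_zero))
  have hderiv1 : deriv (fun t : ℝ => f (x + t • v)) =ᶠ[𝓝 (0:ℝ)]
      fun t => fderiv ℝ f (x + t • v) v := by
    filter_upwards [hev] with t ht
    exact (ht.hasFDerivAt.comp_hasDerivAt t (hL t)).deriv
  rw [hderiv1.deriv_eq]
  -- now the outer derivative
  have hD : HasFDerivAt (fderiv ℝ f) (fderiv ℝ (fderiv ℝ f) x) x :=
    ((hf.fderiv_right (m := 1) le_rfl).differentiableAt one_ne_zero).hasFDerivAt
  have hcomp : HasDerivAt (fun t : ℝ => fderiv ℝ f (x + t • v))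
      (fderiv ℝ (fderiv ℝ f) x v) 0 := by
    have hD' : HasFDerivAt (fderiv ℝ f) (fderiv ℝ (fderiv ℝ f) x) (x + (0:ℝ) • v) := by
      simpa using hD
    have := hD'.comp_hasDerivAt 0 (hL 0)
    exact this
  have : HasDerivAt (fun t : ℝ => fderiv ℝ f (x + t • v) v)
      (fderiv ℝ (fderiv ℝ f) x v v) 0 := by
    have h := hcomp.clm_apply (hasDerivAt_const 0 v)
    simpa using h
  exact this.deriv.symm


lemma deriv2_log_quadratic {γ β K : ℝ} (hγ : 0 < γ) :
    deriv (deriv (fun t : ℝ => K - Real.log (γ - 2*β*t - t^2))) 0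
      = (2*γ + 4*β^2)/γ^2 := by
  set q : ℝ → ℝ := fun t => γ - 2*β*t - t^2 with hq
  have hqder : ∀ t : ℝ, HasDerivAt q (-(2*β) - 2*t) t := by
    intro t
    have h1 : HasDerivAt (fun t : ℝ => γ - 2*β*t - t^2) (0 - 2*β*1 - 2*t) t := by
      have := ((hasDerivAt_const t γ).sub ((hasDerivAt_id t).const_mul (2*β))).sub
        (hasDerivAt_pow 2 t)
      refine this.congr_deriv ?_
      norm_num
    simpa using h1.congr_deriv (by ring)
  have hqpos : ∀ᶠ t in 𝓝 (0:ℝ), 0 < q t := by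
    have hc : ContinuousAt q 0 := (hqder 0).continuousAt
    have : q 0 = γ := by simp [hq]
    exact continuousAt_const.eventually_lt hc (by simpa [this] using hγ)
  have hgder : ∀ᶠ t in 𝓝 (0:ℝ), deriv (fun t : ℝ => K - Real.log (q t)) t
      = (2*β + 2*t)/(q t) := by
    filter_upwards [hqpos] with t ht
    have hlog : HasDerivAt (fun t => Real.log (q t)) ((q t)⁻¹ * (-(2*β) - 2*t)) t :=
      (Real.hasDerivAt_log (ne_of_gt ht)).comp t (hqder t)
    have : HasDerivAt (fun t => K - Real.log (q t)) (0 - (q t)⁻¹ * (-(2*β) - 2*t)) t :=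
      (hasDerivAt_const t K).sub hlog
    rw [this.deriv]
    field_simp
    ring
  have heq : deriv (fun t : ℝ => K - Real.log (q t)) =ᶠ[𝓝 (0:ℝ)]
      fun t => (2*β + 2*t)/(q t) := hgder
  rw [show (fun t : ℝ => K - Real.log (γ - 2*β*t - t^2)) = fun t => K - Real.log (q t) from rfl]
  rw [heq.deriv_eq]
  have hnum : HasDerivAt (fun t : ℝ => 2*β + 2*t) 2 0 := by
    simpa using ((hasDerivAt_id (0:ℝ)).const_mul 2).const_add (2*β)
  have hq0 : q 0 = γ := by simp [hq]
  have hdiv : HasDerivAt (fun t : ℝ => (2*β + 2*t)/(q t))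
      ((2 * q 0 - (2*β + 2*0) * (-(2*β) - 2*0)) / (q 0)^2) 0 :=
    hnum.div (hqder 0) (by rw [hq0]; exact ne_of_gt hγ)
  rw [hdiv.deriv, hq0]
  field_simp
  ring


lemma deriv2_sub {p q : ℝ → ℝ} (hp : ContDiffAt ℝ 2 p 0) (hq : ContDiffAt ℝ 2 q 0) :
    deriv (deriv (fun t => p t - q t)) 0 = deriv (deriv p) 0 - deriv (deriv q) 0 := by
  have hev : deriv (fun t => p t - q t) =ᶠ[𝓝 (0:ℝ)] fun t => deriv p t - deriv q t := by
    filter_upwards [hp.eventually (by norm_num), hq.eventually (by norm_num)] with t h1 h2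
    exact deriv_fun_sub (h1.differentiableAt two_ne_zero) (h2.differentiableAt two_ne_zero)
  rw [hev.deriv_eq]
  exact deriv_fun_sub ((contDiffAt_deriv_of_contDiffAt hp).differentiableAt one_ne_zero)
    ((contDiffAt_deriv_of_contDiffAt hq).differentiableAt one_ne_zero)

noncomputable def barrier (c a : ℝ) (z : Plane) : ℝ :=
  Real.log (2*a) - Real.log (Real.sqrt c) - Real.log (a^2 - ‖z‖^2)

lemma norm_sq_line (z : Plane) (i : Fin 2) (t : ℝ) :
    ‖z + t • EuclideanSpace.single i (1:ℝ)‖^2 = ‖z‖^2 + 2*(z i)*t + t^2 := by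
  rw [norm_add_sq_real]
  have h1 : (inner ℝ z (t • EuclideanSpace.single i (1:ℝ)) : ℝ) = t * (z i) := by
    rw [real_inner_smul_right]
    rw [EuclideanSpace.inner_single_right (𝕜 := ℝ) i 1 z]
    simp
  have h2 : ‖t • EuclideanSpace.single i (1:ℝ)‖^2 = t^2 := by
    rw [norm_smul]
    simp [mul_pow, sq_abs]
  rw [h1, h2]
  ring


lemma norm_sq_sum (z : Plane) : ‖z‖^2 = ∑ i : Fin 2, (z i)^2 := by
  rw [EuclideanSpace.norm_eq, Real.sq_sqrt (by positivity)]
  simp [sq_abs]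


lemma barrier_contDiffAt {c a : ℝ} {z : Plane} (hz : ‖z‖^2 < a^2) :
    ContDiffAt ℝ 2 (barrier c a) z := by
  have hne : a^2 - ‖z‖^2 ≠ 0 := ne_of_gt (sub_pos.2 hz)
  have h1 : ContDiffAt ℝ 2 (fun z : Plane => Real.log (a^2 - ‖z‖^2)) z :=
    (Real.contDiffAt_log.2 hne).comp z
      ((contDiff_const.sub (contDiff_norm_sq ℝ)).contDiffAt)
  exact contDiffAt_const.sub h1


lemma barrier_laplacian {c a : ℝ} {z : Plane} (hz : ‖z‖^2 < a^2) :
    laplacian (barrier c a) z = 4*a^2/(a^2 - ‖z‖^2)^2 := by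
  have hγ : 0 < a^2 - ‖z‖^2 := sub_pos.2 hz
  have hline : ∀ i : Fin 2,
      iteratedFDeriv ℝ 2 (barrier c a) z (fun _ => EuclideanSpace.single i 1)
        = (2*(a^2-‖z‖^2) + 4*(z i)^2)/(a^2-‖z‖^2)^2 := by
    intro i
    rw [iteratedFDeriv_two_line (barrier_contDiffAt hz)]
    have hfe : (fun t : ℝ => barrier c a (z + t • EuclideanSpace.single i 1))
        = fun t : ℝ => (Real.log (2*a) - Real.log (Real.sqrt c))
            - Real.log ((a^2-‖z‖^2) - 2*(z i)*t - t^2) := by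
      funext t
      simp only [barrier]
      rw [norm_sq_line]
      ring_nf
    rw [hfe, deriv2_log_quadratic hγ]
  rw [laplacian]
  simp_rw [hline]
  rw [← Finset.sum_div]
  have hsum : ∑ i : Fin 2, (2*(a^2-‖z‖^2) + 4*(z i)^2)
      = 2*(2*(a^2-‖z‖^2)) + 4*‖z‖^2 := by
    rw [Finset.sum_add_distrib]
    have h4 : ∑ i : Fin 2, 4 * (z i)^2 = 4 * ‖z‖^2 := by
      rw [← Finset.mul_sum, ← norm_sq_sum]
    rw [h4]
    simp [Finset.sum_const]
  rw [hsum]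
  congr 1
  ring


lemma barrier_exp {c a : ℝ} (hc : 0 < c) (ha : 0 < a) {z : Plane} (hz : ‖z‖^2 < a^2) :
    c * Real.exp (2 * barrier c a z) = 4*a^2/(a^2 - ‖z‖^2)^2 := by
  have hγ : 0 < a^2 - ‖z‖^2 := sub_pos.2 hz
  have hsc : 0 < Real.sqrt c := Real.sqrt_pos.2 hc
  have h1 : Real.exp (barrier c a z) = 2*a/(Real.sqrt c * (a^2-‖z‖^2)) := by
    simp only [barrier]
    rw [Real.exp_sub, Real.exp_sub, Real.exp_log (by positivity),
      Real.exp_log hsc, Real.exp_log hγ]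
    field_simp
  rw [two_mul, Real.exp_add, h1]
  have hcs : Real.sqrt c * Real.sqrt c = c := Real.mul_self_sqrt hc.le
  field_simp
  ring_nf
  rw [Real.sq_sqrt hc.le]


end helpers

/-- elliptic comparison from below: if `u ∈ C²(𝒟)` satisfies
`Δu ≤ c e^{2u}` and `u(x) → ∞` as `|x| → 1⁻`, then `u` is bounded below by the conformal
factor `log(2/(√c (1-|x|²)))` of the complete metric of constant curvature `-c` on `𝒟`. -/
theorem conformal_factor_lower_bound (c : ℝ) (hc : 0 < c) (u : Plane → ℝ)
    (hu : ContDiffOn ℝ 2 u (ball 0 1))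
    (hΔ : ∀ x ∈ ball (0 : Plane) 1, laplacian u x ≤ c * exp (2 * u x))
    (hblow : Tendsto u (comap (fun x : Plane => ‖x‖) (𝓝[<] (1 : ℝ))) atTop) :
    ∀ x ∈ ball (0 : Plane) 1,
      Real.log (2 / (Real.sqrt c * (1 - ‖x‖ ^ 2))) ≤ u x := by
  -- Main comparison claim: for every a > 1 the barrier lies below u.
  have key : ∀ a : ℝ, 1 < a → ∀ z ∈ ball (0 : Plane) 1, barrier c a z ≤ u z := by
    intro a ha
    by_contra hcon
    push_neg at hcon
    obtain ⟨x₀, hx₀ball, hx₀⟩ := hcon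
    have hx₀n : ‖x₀‖ < 1 := by rwa [mem_ball_zero_iff] at hx₀ball
    have ha0 : (0:ℝ) < a := lt_trans one_pos ha
    have ha1 : (1:ℝ) < a^2 := by nlinarith
    -- global bound for the barrier on the closed unit ball
    set V : ℝ := Real.log (2*a) - Real.log (Real.sqrt c) - Real.log (a^2 - 1) with hV
    have hVb : ∀ z : Plane, ‖z‖ ≤ 1 → barrier c a z ≤ V := by
      intro z hz
      have h1 : (0:ℝ) < a^2 - 1 := by linarith
      have h2 : a^2 - 1 ≤ a^2 - ‖z‖^2 := by nlinarith [norm_nonneg z]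
      have := Real.log_le_log h1 h2
      simp only [barrier, hV]
      linarith
    -- blow-up near the boundary
    have hU : ∀ᶠ r in 𝓝[<] (1:ℝ), ∀ z : Plane, ‖z‖ = r → V < u z := by
      have := hblow.eventually (eventually_gt_atTop V)
      rwa [eventually_comap] at this
    obtain ⟨l, hl, hlsub⟩ := mem_nhdsLT_iff_exists_Ioo_subset.1 hU
    have hl1 : l < 1 := mem_Iio.1 hl
    set ρ : ℝ := max l ‖x₀‖ with hρ
    have hρ1 : ρ < 1 := max_lt hl1 hx₀n
    set ρ' : ℝ := (ρ + 1)/2 with hρ'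
    have hρρ' : ρ < ρ' := by rw [hρ']; linarith
    have hρ'1 : ρ' < 1 := by rw [hρ']; linarith
    set w : Plane → ℝ := fun z => barrier c a z - u z with hw
    have hKsub : closedBall (0:Plane) ρ' ⊆ ball 0 1 := closedBall_subset_ball hρ'1
    have hnormsq : ∀ z : Plane, z ∈ closedBall (0:Plane) ρ' → ‖z‖^2 < a^2 := by
      intro z hz
      rw [mem_closedBall_zero_iff] at hz
      nlinarith [norm_nonneg z]
    have hwcont : ContinuousOn w (closedBall (0:Plane) ρ') := by
      apply ContinuousOn.sub
      · intro z hz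
        exact (barrier_contDiffAt (hnormsq z hz)).continuousAt.continuousWithinAt
      · exact hu.continuousOn.mono hKsub
    have hx₀K : x₀ ∈ closedBall (0:Plane) ρ' := by
      rw [mem_closedBall_zero_iff]
      have : ‖x₀‖ ≤ ρ := le_max_right l ‖x₀‖
      linarith
    obtain ⟨z₀, hz₀K, hz₀max⟩ :=
      (isCompact_closedBall (0:Plane) ρ').exists_isMaxOn ⟨x₀, hx₀K⟩ hwcont
    have hwz₀ : 0 < w z₀ := by
      have h1 : w x₀ ≤ w z₀ := hz₀max hx₀K
      have h2 : 0 < w x₀ := sub_pos.2 hx₀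
      linarith
    have hz₀ρ : ‖z₀‖ ≤ ρ := by
      by_contra hcon2
      push_neg at hcon2
      have hz₀le : ‖z₀‖ ≤ ρ' := mem_closedBall_zero_iff.1 hz₀K
      have h1 : V < u z₀ := hlsub ⟨lt_of_le_of_lt (le_max_left l ‖x₀‖) hcon2,
        lt_of_le_of_lt hz₀le hρ'1⟩ z₀ rfl
      have h2 : barrier c a z₀ ≤ V := hVb z₀ (le_of_lt (lt_of_le_of_lt hz₀le hρ'1))
      have : w z₀ < 0 := by rw [hw]; simp; linarith
      linarith
    have hz₀ball1 : z₀ ∈ ball (0:Plane) 1 := by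
      rw [mem_ball_zero_iff]; linarith
    have hz₀sq : ‖z₀‖^2 < a^2 := by nlinarith [norm_nonneg z₀]
    have hlocmax : IsLocalMax w z₀ := by
      apply hz₀max.isLocalMax
      apply Filter.mem_of_superset (isOpen_ball.mem_nhds _) ball_subset_closedBall
      rw [mem_ball_zero_iff]; linarith
    have hu_at : ContDiffAt ℝ 2 u z₀ := hu.contDiffAt (isOpen_ball.mem_nhds hz₀ball1)
    have hb_at : ContDiffAt ℝ 2 (barrier c a) z₀ := barrier_contDiffAt hz₀sq
    -- second derivative comparison along each coordinate line
    have hcomp : ∀ i : Fin 2,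
        iteratedFDeriv ℝ 2 (barrier c a) z₀ (fun _ => EuclideanSpace.single i 1)
          ≤ iteratedFDeriv ℝ 2 u z₀ (fun _ => EuclideanSpace.single i 1) := by
      intro i
      set v : Plane := EuclideanSpace.single i (1:ℝ) with hv
      set L : ℝ → Plane := fun t => z₀ + t • v with hLdef
      have hL0 : L 0 = z₀ := by simp [hLdef]
      have hLsm : ContDiffAt ℝ 2 L 0 :=
        (contDiff_const.add (contDiff_id.smul contDiff_const)).contDiffAt
      have hb_at' : ContDiffAt ℝ 2 (barrier c a) (L 0) := by rwa [hL0]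
      have hu_at' : ContDiffAt ℝ 2 u (L 0) := by rwa [hL0]
      have hp : ContDiffAt ℝ 2 (fun t => barrier c a (L t)) 0 := hb_at'.comp 0 hLsm
      have hq : ContDiffAt ℝ 2 (fun t => u (L t)) 0 := hu_at'.comp 0 hLsm
      have hg : ContDiffAt ℝ 2 (fun t => barrier c a (L t) - u (L t)) 0 := hp.sub hq
      have hgmax : IsLocalMax (fun t => barrier c a (L t) - u (L t)) 0 := by
        have hten : Tendsto L (𝓝 0) (𝓝 z₀) := by
          have := hLsm.continuousAt.tendsto
          rwa [hL0] at this
        have := hten.eventually hlocmax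
        simp only [IsLocalMax, IsMaxFilter] at this ⊢
        filter_upwards [this] with t ht
        simpa [hw, hL0] using ht
      have h1 : deriv (deriv (fun t => barrier c a (L t) - u (L t))) 0 ≤ 0 :=
        second_deriv_nonpos_of_isLocalMax hg hgmax
      rw [deriv2_sub hp hq] at h1
      rw [iteratedFDeriv_two_line hb_at, iteratedFDeriv_two_line hu_at]
      linarith
    have hlap : laplacian (barrier c a) z₀ ≤ laplacian u z₀ := by
      apply Finset.sum_le_sum
      intro i _
      exact hcomp i
    rw [barrier_laplacian hz₀sq] at hlap
    have h2 : laplacian u z₀ ≤ c * Real.exp (2 * u z₀) := hΔ z₀ hz₀ball1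
    have h3 : c * Real.exp (2 * u z₀) < c * Real.exp (2 * barrier c a z₀) := by
      apply mul_lt_mul_of_pos_left _ hc
      apply Real.exp_lt_exp.2
      have : u z₀ < barrier c a z₀ := by
        have := hwz₀; rw [hw] at this; simp at this; linarith
      linarith
    rw [barrier_exp hc ha0 hz₀sq] at h3
    linarith
  -- pass to the limit a → 1⁺
  intro x hxball
  have hxn : ‖x‖ < 1 := by rwa [mem_ball_zero_iff] at hxball
  have hden : (0:ℝ) < 1 - ‖x‖^2 := by nlinarith [norm_nonneg x]
  have hsc : 0 < Real.sqrt c := Real.sqrt_pos.2 hc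
  have h1 : ContinuousAt (fun a : ℝ => Real.log (2*a)) 1 := by
    apply ContinuousAt.comp (x := (1:ℝ)) (g := Real.log)
    · exact Real.continuousAt_log (by norm_num)
    · exact (continuous_const.mul continuous_id).continuousAt
  have h2 : ContinuousAt (fun a : ℝ => Real.log (a^2 - ‖x‖^2)) 1 := by
    apply ContinuousAt.comp (x := (1:ℝ)) (g := Real.log)
    · exact Real.continuousAt_log (by simp; nlinarith)
    · exact ((continuous_pow 2).sub continuous_const).continuousAt
  have hcontb : ContinuousAt (fun a : ℝ => barrier c a x) 1 := by
    simp only [barrier]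
    exact (h1.sub continuousAt_const).sub h2
  have hten : Tendsto (fun a : ℝ => barrier c a x) (𝓝[>] (1:ℝ)) (𝓝 (barrier c 1 x)) :=
    hcontb.tendsto.mono_left nhdsWithin_le_nhds
  have hle : barrier c 1 x ≤ u x := by
    apply le_of_tendsto hten
    exact Filter.eventually_of_mem self_mem_nhdsWithin (fun a ha => key a ha x hxball)
  have heq : barrier c 1 x = Real.log (2 / (Real.sqrt c * (1 - ‖x‖ ^ 2))) := by
    rw [Real.log_div (by norm_num) (by positivity),
      Real.log_mul (ne_of_gt hsc) (ne_of_gt hden)]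
    simp [barrier]
    ring
  linarith [heq ▸ hle]
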